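/- Let G be a finite simple graph, s ≥ 1 an integer, and σ an s-degeneracy ordering of G of width d. Then every s-club of G has at most d + 1 vertices. -/
import Mathlib


/-- `C` is an `s`-club in `G`: any two vertices of `C` have distance at most `s`
in the induced subgraph `G[C]`. -/
def IsSClub {V : Type*} (G : SimpleGraph V) (s : ℕ) (C : Set V) : Prop :=
  ∀ u v : C, (G.induce C).edist u v ≤ s

/-- The `x`-th neighborhood of `v` in `G`: vertices `u` with `1 ≤ dist_G(u,v) ≤ x`. -/
def xNbhd {V : Type*} (G : SimpleGraph V) (x : ℕ) (v : V) : Set V :=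
  {u | 1 ≤ G.edist u v ∧ G.edist u v ≤ x}

/-- The set of vertices appearing at or after `v` in the ordering `σ`. -/
def laterSet {V : Type*} (σ : V → ℕ) (v : V) : Set V := {u | σ v ≤ σ u}

theorem mem_laterSet_self {V : Type*} (σ : V → ℕ) (v : V) : v ∈ laterSet σ v :=
  le_refl (σ v)

/-- `σ` (an injective enumeration, i.e. a linear ordering of the vertices) is an
`x`-degeneracy ordering of `G` of width `d`. -/
def IsXDegenOrdering {V : Type*} (G : SimpleGraph V) (x d : ℕ) (σ : V → ℕ) : Prop :=
  Function.Injective σ ∧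
  ∀ v : V, (xNbhd (G.induce (laterSet σ v)) x ⟨v, mem_laterSet_self σ v⟩).ncard ≤ d

theorem stmt_9 {V : Type*} [Fintype V] (G : SimpleGraph V) (s : ℕ) (hs : 1 ≤ s)
    (d : ℕ) (σ : V → ℕ) (hσ : IsXDegenOrdering G s d σ)
    (C : Set V) (hC : IsSClub G s C) : C.ncard ≤ d + 1 := by
  classical
  rcases C.eq_empty_or_nonempty with rfl | hne
  · simp
  obtain ⟨v, hvC, hvmin⟩ := Set.exists_min_image C σ (Set.toFinite C) hne
  set L := laterSet σ v with hL
  have hsub : C ⊆ L := fun u hu => hvmin u hu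
  -- the map from C \ {v} to the s-neighborhood of v in the induced graph
  have key : ∀ u (hu : u ∈ C \ {v}),
      (⟨u, hsub hu.1⟩ : L) ∈
        xNbhd (G.induce L) s ⟨v, mem_laterSet_self σ v⟩ := by
    intro u hu
    obtain ⟨huC, hune⟩ := hu
    have hne' : u ≠ v := hune
    constructor
    · -- 1 ≤ edist
      refine Order.one_le_iff_pos.mpr (SimpleGraph.edist_pos_of_ne ?_)
      simp [Subtype.ext_iff, hne']
    · -- edist ≤ s : transfer walk from induce C to induce L
      have hd : (G.induce C).edist ⟨u, huC⟩ ⟨v, hvC⟩ ≤ s := hC ⟨u, huC⟩ ⟨v, hvC⟩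
      have hnt : (G.induce C).edist ⟨u, huC⟩ ⟨v, hvC⟩ ≠ ⊤ :=
        ne_top_of_le_ne_top (by simp) hd
      obtain ⟨p, hp⟩ := SimpleGraph.exists_walk_of_edist_ne_top hnt
      let f : G.induce C →g G.induce L :=
        ⟨fun x => ⟨x.1, hsub x.2⟩, fun h => h⟩
      have := SimpleGraph.edist_le (p.map f)
      rw [SimpleGraph.Walk.length_map, hp] at this
      exact this.trans hd
  have hfin : (xNbhd (G.induce L) s ⟨v, mem_laterSet_self σ v⟩).Finite := Set.toFinite _
  have hinj : Set.InjOn (fun u => if h : u ∈ C \ {v} then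
      (⟨u, hsub h.1⟩ : L) else ⟨v, mem_laterSet_self σ v⟩) (C \ {v}) := by
    intro a ha b hb hab
    simp only [dif_pos ha, dif_pos hb, Subtype.mk.injEq] at hab
    exact hab
  have hle : (C \ {v}).ncard ≤ d := by
    refine le_trans (Set.ncard_le_ncard_of_injOn _ ?_ hinj hfin) (hσ.2 v)
    intro a ha
    simp only [dif_pos ha]
    exact key a ha
  have := Set.ncard_diff_singleton_add_one hvC (Set.toFinite C)
  omega
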